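/- For x ∈ (0, 1/2), if the sender sets α_x = κ_x(s*(x))/(1 + κ_x(s*(x))) and troll density g(s) = ((1−α_x)/α_x)·κ_x'(s) for s < s*(x) and g(s) = 0 for s ≥ s*(x), then g is a probability density (integrates to 1 over ℝ) and the induced posterior π(s) equals exactly x for all s < s*(x). -/

import Mathlib

open MeasureTheory Set

/-- for `x ∈ (0,1/2)`, the sender's optimal troll density `g`
(supported below `s*(x)`, with mass `α_x = κ_x(s*(x))/(1+κ_x(s*(x)))`)
is a probability density and induces posterior exactly `x` below `s*(x)`. -/
theorem stmt_5 (f0 f1 F0 F1 : ℝ → ℝ)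
    (hf0 : ∀ s, 0 < f0 s) (hf1 : ∀ s, 0 < f1 s)
    (hF0 : ∀ s, HasDerivAt F0 (f0 s) s) (hF1 : ∀ s, HasDerivAt F1 (f1 s) s)
    (hF0bot : Filter.Tendsto F0 Filter.atBot (nhds 0))
    (hF1bot : Filter.Tendsto F1 Filter.atBot (nhds 0))
    (hm : StrictMono fun s => f1 s / f0 s)
    (x : ℝ) (hx : x ∈ Set.Ioo (0 : ℝ) (1 / 2))
    (sstar : ℝ) (hstar : f1 sstar / f0 sstar = x / (1 - x))
    (κ : ℝ → ℝ) (hκ : ∀ s, κ s = (x * F0 s - (1 - x) * F1 s) / (1 - 2 * x))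
    (α : ℝ) (hα : α = κ sstar / (1 + κ sstar))
    (g : ℝ → ℝ)
    (hg : ∀ s, g s = if s < sstar then
        ((1 - α) / α) * ((x * f0 s - (1 - x) * f1 s) / (1 - 2 * x)) else 0)
    (hgint : Integrable g) :
    (∫ s, g s = 1) ∧
      ∀ s < sstar,
        ((1 - α) * f1 s + α * g s) /
          ((1 - α) * (f1 s + f0 s) + 2 * (α * g s)) = x := by
  obtain ⟨hx0, hx2⟩ := hx
  have h2x : 0 < 1 - 2 * x := by linarith
  have h1x : 0 < 1 - x := by linarith
  -- derivative of κ
  set κ' : ℝ → ℝ := fun s => (x * f0 s - (1 - x) * f1 s) / (1 - 2 * x) with hκ'def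
  have hκfun : κ = fun s => (x * F0 s - (1 - x) * F1 s) / (1 - 2 * x) := funext hκ
  have hκderiv : ∀ s, HasDerivAt κ (κ' s) s := by
    intro s
    rw [hκfun]
    exact (((hF0 s).const_mul x).sub ((hF1 s).const_mul (1 - x))).div_const _
  have hκbot : Filter.Tendsto κ Filter.atBot (nhds 0) := by
    rw [hκfun]
    have : Filter.Tendsto (fun s => (x * F0 s - (1 - x) * F1 s) / (1 - 2 * x))
        Filter.atBot (nhds ((x * 0 - (1 - x) * 0) / (1 - 2 * x))) :=
      ((hF0bot.const_mul x).sub (hF1bot.const_mul (1 - x))).div_const _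
    simpa using this
  -- on (-∞, sstar), κ' is positive
  have hratio : ∀ s < sstar, (1 - x) * f1 s < x * f0 s := by
    intro s hs
    have h := hm hs
    dsimp only at h
    rw [hstar] at h
    have h0 := hf0 s
    rw [div_lt_div_iff₀ h0 h1x] at h
    linarith
  have hκ'pos : ∀ s < sstar, 0 < κ' s := by
    intro s hs
    exact div_pos (by linarith [hratio s hs]) h2x
  have hκ'nonneg : ∀ s ≤ sstar, 0 ≤ κ' s := by
    intro s hs
    rcases lt_or_eq_of_le hs with h | h
    · exact (hκ'pos s h).le
    · subst h
      have := hstar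
      rw [div_eq_div_iff (hf0 s).ne' (by positivity)] at this
      have : (1 - x) * f1 s ≤ x * f0 s := by nlinarith [this]
      exact div_nonneg (by linarith) h2x.le
  -- κ is monotone on Iic sstar
  have hmono : MonotoneOn κ (Iic sstar) := by
    apply monotoneOn_of_deriv_nonneg (convex_Iic sstar)
      (fun s _ => (hκderiv s).continuousAt.continuousWithinAt)
      (fun s hs => (hκderiv s).differentiableAt.differentiableWithinAt)
    intro s hs
    rw [interior_Iic] at hs
    rw [(hκderiv s).deriv]
    exact hκ'nonneg s hs.le
  -- κ sstar > 0
  have hsm : StrictMonoOn κ (Iic sstar) := by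
    apply strictMonoOn_of_deriv_pos (convex_Iic sstar)
      (fun s _ => (hκderiv s).continuousAt.continuousWithinAt)
    intro s hs
    rw [interior_Iic] at hs
    rw [(hκderiv s).deriv]
    exact hκ'pos s hs
  have hκstar_pos : 0 < κ sstar := by
    have h1 : 0 ≤ κ (sstar - 1) := by
      refine le_of_tendsto hκbot ?_
      filter_upwards [Filter.Iic_mem_atBot (sstar - 1)] with s hs
      have hs' : s ≤ sstar - 1 := hs
      exact hmono (mem_Iic.2 (by linarith)) (mem_Iic.2 (by linarith)) hs'
    have h2 : κ (sstar - 1) < κ sstar :=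
      hsm (mem_Iic.2 (by linarith)) (mem_Iic.2 le_rfl) (by linarith)
    linarith
  -- facts about α
  have h1κ : 0 < 1 + κ sstar := by linarith
  have hα_pos : 0 < α := by rw [hα]; positivity
  have hα_lt1 : α < 1 := by
    rw [hα, div_lt_one h1κ]; linarith
  have h1α : 0 < 1 - α := by linarith
  have hca : (1 - α) / α = 1 / κ sstar := by
    rw [hα]
    field_simp
    ring
  constructor
  · -- integral = 1
    have hgind : g = Set.indicator (Iio sstar) (fun s => ((1 - α) / α) * κ' s) := by
      funext s
      rw [hg s, Set.indicator]
      by_cases h : s < sstar <;> simp [h, hκ'def]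
    have hint : IntegrableOn (fun s => ((1 - α) / α) * κ' s) (Iic sstar) := by
      rw [integrableOn_Iic_iff_integrableOn_Iio]
      rw [hgind] at hgint
      exact (integrable_indicator_iff measurableSet_Iio).mp hgint
    have hFTC : ∫ s in Iic sstar, ((1 - α) / α) * κ' s
        = ((1 - α) / α) * κ sstar - ((1 - α) / α) * 0 := by
      apply integral_Iic_of_hasDerivAt_of_tendsto
        (((hκderiv sstar).const_mul ((1 - α) / α)).continuousAt.continuousWithinAt)
        (fun s _ => (hκderiv s).const_mul ((1 - α) / α)) hint
      simpa using hκbot.const_mul ((1 - α) / α)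
    rw [hgind, integral_indicator measurableSet_Iio,
      ← integral_Iic_eq_integral_Iio, hFTC, hca]
    field_simp
    ring
  · -- posterior equals x
    intro s hs
    have hgval : α * g s = (1 - α) * κ' s := by
      rw [hg s, if_pos hs, hκ'def]
      field_simp
    rw [hgval]
    have hd : f1 s < f0 s := by
      have := hratio s hs
      nlinarith [hf0 s, hf1 s]
    have hnum : (1 - α) * f1 s + (1 - α) * κ' s
        = (1 - α) * x * (f0 s - f1 s) / (1 - 2 * x) := by
      rw [hκ'def]; have : 1 - x * 2 ≠ 0 := by nlinarith
      field_simp; ring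
    have hden : (1 - α) * (f1 s + f0 s) + 2 * ((1 - α) * κ' s)
        = (1 - α) * (f0 s - f1 s) / (1 - 2 * x) := by
      rw [hκ'def]; field_simp; ring
    have hne : (1 - α) * (f0 s - f1 s) / (1 - 2 * x) ≠ 0 := by
      apply div_ne_zero (mul_ne_zero h1α.ne' (by linarith)) h2x.ne'
    rw [hnum, hden, div_eq_iff hne]
    ring
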